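/- Let x₀ ∈ [0,+∞] and let f and g be positive functions on a neighborhood of x₀ such that f(x) → L as x → x₀, where L ∈ {0, +∞}, and f(x)/g(x) → 1 as x → x₀. Let h be a positive measurable function that varies regularly at L with some index ρ, i.e. for every a > 0, h(ay)/h(y) → a^ρ as y → L. Then h(f(x))/h(g(x)) → 1 as x → x₀. -/

import Mathlib

open Filter Set

open MeasureTheory Real

/-- Uniform convergence theorem for regular variation (additive form, at `atTop`). -/
lemma rv_uniform (k : ℝ → ℝ) (hk : Measurable k) (ρ : ℝ)
    (hp : ∀ u : ℝ, Tendsto (fun t => k (t + u) - k t) atTop (nhds (ρ * u)))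
    {ε : ℝ} (hε : 0 < ε) :
    ∃ δ > 0, ∀ᶠ t in atTop, ∀ u, |u| ≤ δ → |k (t + u) - k t - ρ * u| ≤ ε := by
  by_contra hcon
  push_neg at hcon
  -- extract sequences t n → ∞, u n → 0 with failure
  have hseq : ∀ n : ℕ, ∃ t : ℝ, (n : ℝ) ≤ t ∧ ∃ u : ℝ, |u| ≤ 1 / ((n:ℝ) + 1) ∧
      ε < |k (t + u) - k t - ρ * u| := by
    intro n
    have h1 : (0:ℝ) < 1 / ((n:ℝ) + 1) := by positivity
    have := hcon (1 / ((n:ℝ) + 1)) h1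
    rcases (frequently_atTop.mp this (n : ℝ)) with ⟨t, ht, hu⟩
    exact ⟨t, ht, hu⟩
  choose t ht u hu hbad using hseq
  have hu1 : ∀ n, |u n| ≤ 1 := fun n => (hu n).trans (by
    rw [div_le_one (by positivity)]; simp)
  have htT : Tendsto t atTop atTop :=
    tendsto_atTop_mono ht tendsto_natCast_atTop_atTop
  have huT : Tendsto u atTop (nhds 0) := by
    have h0 : Tendsto (fun n : ℕ => 1 / ((n : ℝ) + 1)) atTop (nhds 0) :=
      tendsto_one_div_add_atTop_nhds_zero_nat
    exact squeeze_zero_norm (fun n => by simpa using hu n) h0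
  have htuT : Tendsto (fun n => t n + u n) atTop atTop :=
    tendsto_atTop_add_right_of_le' atTop (-1) htT
      (Eventually.of_forall fun n => neg_le_of_abs_le (hu1 n))
  -- the Egorov-style sets
  set E : ℕ → Set ℝ := fun n =>
    Icc (0:ℝ) 2 ∩ ⋂ m, ⋂ (_ : n ≤ m), {v | |k (t m + v) - k (t m) - ρ * v| ≤ ε / 3} with hE
  set F : ℕ → Set ℝ := fun n =>
    Icc (-1:ℝ) 3 ∩ ⋂ m, ⋂ (_ : n ≤ m),
      {v | |k (t m + u m + v) - k (t m + u m) - ρ * v| ≤ ε / 3} with hF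
  have hmeasfun : ∀ c : ℝ, MeasurableSet {v : ℝ | |k (c + v) - k c - ρ * v| ≤ ε / 3} := by
    intro c
    have : Measurable fun v : ℝ => |k (c + v) - k c - ρ * v| :=
      (((hk.comp (measurable_const_add c)).sub measurable_const).sub
        (measurable_const.mul measurable_id)).abs
    exact this measurableSet_Iic
  have hEm : ∀ n, MeasurableSet (E n) := fun n =>
    measurableSet_Icc.inter (MeasurableSet.iInter fun m => MeasurableSet.iInter
      fun _ => hmeasfun _)
  have hFm : ∀ n, MeasurableSet (F n) := fun n =>
    measurableSet_Icc.inter (MeasurableSet.iInter fun m => MeasurableSet.iInter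
      fun _ => hmeasfun _)
  have hEmono : Monotone E := by
    intro a b hab
    refine inter_subset_inter le_rfl ?_
    exact iInter₂_mono' fun m hm => ⟨m, hab.trans hm, le_rfl⟩
  have hFmono : Monotone F := by
    intro a b hab
    refine inter_subset_inter le_rfl ?_
    exact iInter₂_mono' fun m hm => ⟨m, hab.trans hm, le_rfl⟩
  -- unions
  have hEU : ⋃ n, E n = Icc (0:ℝ) 2 := by
    apply Subset.antisymm (iUnion_subset fun n => inter_subset_left)
    intro v hv
    have : Tendsto (fun m => k (t m + v) - k (t m) - ρ * v) atTop (nhds 0) := by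
      have := ((hp v).comp htT).sub_const (ρ * v)
      simpa using this
    have : ∀ᶠ m in atTop, |k (t m + v) - k (t m) - ρ * v| ≤ ε / 3 := by
      have := this.eventually (eventually_abs_sub_lt 0 (by linarith : 0 < ε / 3))
      filter_upwards [this] with m hm
      simpa using hm.le
    rcases eventually_atTop.mp this with ⟨N, hN⟩
    exact mem_iUnion.mpr ⟨N, hv, mem_iInter₂.mpr fun m hm => hN m hm⟩
  have hFU : ⋃ n, F n = Icc (-1:ℝ) 3 := by
    apply Subset.antisymm (iUnion_subset fun n => inter_subset_left)
    intro v hv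
    have : Tendsto (fun m => k (t m + u m + v) - k (t m + u m) - ρ * v) atTop (nhds 0) := by
      have := ((hp v).comp htuT).sub_const (ρ * v)
      simpa using this
    have : ∀ᶠ m in atTop, |k (t m + u m + v) - k (t m + u m) - ρ * v| ≤ ε / 3 := by
      have := this.eventually (eventually_abs_sub_lt 0 (by linarith : 0 < ε / 3))
      filter_upwards [this] with m hm
      simpa using hm.le
    rcases eventually_atTop.mp this with ⟨N, hN⟩
    exact mem_iUnion.mpr ⟨N, hv, mem_iInter₂.mpr fun m hm => hN m hm⟩
  -- measure convergence
  have hEvol : Tendsto (fun n => volume (E n)) atTop (nhds (2 : ENNReal)) := by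
    have := tendsto_measure_iUnion_atTop (μ := volume) hEmono
    rw [hEU] at this
    simpa [Real.volume_Icc, Function.comp_def] using this
  have hFvol : Tendsto (fun n => volume (F n)) atTop (nhds (4 : ENNReal)) := by
    have := tendsto_measure_iUnion_atTop (μ := volume) hFmono
    rw [hFU] at this
    simpa [Real.volume_Icc, Function.comp_def, show (3:ℝ) - (-1) = 4 by norm_num] using this
  have hEev : ∀ᶠ n in atTop, (3/2 : ENNReal) < volume (E n) :=
    hEvol.eventually_const_lt (by
      rw [ENNReal.div_lt_iff (by norm_num) (by norm_num)]; norm_num)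
  have hFev : ∀ᶠ n in atTop, (7/2 : ENNReal) < volume (F n) :=
    hFvol.eventually_const_lt (by
      rw [ENNReal.div_lt_iff (by norm_num) (by norm_num)]; norm_num)
  rcases (hEev.and hFev).exists with ⟨n, hEn, hFn⟩
  -- B = translate of F n
  set B : Set ℝ := (fun v => v - u n) ⁻¹' F n with hB
  have hBvol : volume B = volume (F n) := by
    have : B = (fun v => v + (-u n)) ⁻¹' F n := by
      ext v; simp [hB, sub_eq_add_neg]
    rw [this, measure_preimage_add_right]
  have hBm : MeasurableSet B := (hFm n).preimage (measurable_id.sub measurable_const)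
  -- E n \ B has small measure
  have hsub : E n \ B ⊆ (fun v => v - u n) ⁻¹' (Icc (-1:ℝ) 3 \ F n) := by
    intro v hv
    rcases hv with ⟨hvE, hvB⟩
    have hvI : v ∈ Icc (0:ℝ) 2 := hvE.1
    constructor
    · have h1 := neg_le_of_abs_le (hu1 n)
      have h2 := le_of_abs_le (hu1 n)
      simp only [mem_Icc] at hvI
      simp only [mem_Icc]
      constructor
      · show -1 ≤ v - u n; linarith
      · show v - u n ≤ 3; linarith
    · exact hvB
  have hdiff : volume (E n \ B) ≤ 1/2 := by
    have h1 : volume ((fun v => v - u n) ⁻¹' (Icc (-1:ℝ) 3 \ F n))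
        = volume (Icc (-1:ℝ) 3 \ F n) := by
      have : (fun v : ℝ => v - u n) ⁻¹' (Icc (-1:ℝ) 3 \ F n)
          = (fun v : ℝ => v + (-u n)) ⁻¹' (Icc (-1:ℝ) 3 \ F n) := by
        ext v; simp [sub_eq_add_neg]
      rw [this, measure_preimage_add_right]
    have h2 : volume (Icc (-1:ℝ) 3 \ F n) = volume (Icc (-1:ℝ) 3) - volume (F n) :=
      measure_diff inter_subset_left (hFm n).nullMeasurableSet
        (ne_top_of_le_ne_top (by simp [Real.volume_Icc]) (measure_mono inter_subset_left))
    calc volume (E n \ B) ≤ volume ((fun v => v - u n) ⁻¹' (Icc (-1:ℝ) 3 \ F n)) :=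
          measure_mono hsub
      _ = volume (Icc (-1:ℝ) 3) - volume (F n) := by rw [h1, h2]
      _ ≤ 4 - 7/2 := by
          refine tsub_le_tsub ?_ hFn.le
          simp [Real.volume_Icc]; norm_num
      _ = 1/2 := by
          rw [ENNReal.sub_eq_of_eq_add (by simp [ENNReal.div_eq_top])]
          rw [ENNReal.div_add_div_same]
          rw [ENNReal.eq_div_iff (by norm_num) (by norm_num)]
          norm_num
  -- E n ∩ B nonempty
  have hnon : (E n ∩ B).Nonempty := by
    rw [Set.nonempty_iff_ne_empty]
    intro hemp
    have : E n ⊆ E n \ B := by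
      intro v hv
      refine ⟨hv, fun hvB => ?_⟩
      exact absurd (Set.mem_inter hv hvB) (by simp [hemp])
    have := (measure_mono this).trans hdiff
    refine absurd (hEn.trans_le this) ?_
    simp only [not_lt]
    exact ENNReal.div_le_div (by norm_num) le_rfl
  rcases hnon with ⟨v, hvE, hvB⟩
  -- derive contradiction
  have h1 : |k (t n + v) - k (t n) - ρ * v| ≤ ε / 3 :=
    mem_iInter₂.mp hvE.2 n le_rfl
  have h2 : |k (t n + u n + (v - u n)) - k (t n + u n) - ρ * (v - u n)| ≤ ε / 3 :=
    mem_iInter₂.mp hvB.2 n le_rfl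
  have h3 : t n + u n + (v - u n) = t n + v := by ring
  rw [h3] at h2
  have : |k (t n + u n) - k (t n) - ρ * u n| ≤ 2 * ε / 3 := by
    have key : k (t n + u n) - k (t n) - ρ * u n
        = (k (t n + v) - k (t n) - ρ * v) - (k (t n + v) - k (t n + u n) - ρ * (v - u n)) := by
      ring
    rw [key]
    calc _ ≤ |k (t n + v) - k (t n) - ρ * v| + |k (t n + v) - k (t n + u n) - ρ * (v - u n)| :=
          abs_sub _ _
      _ ≤ 2 * ε / 3 := by linarith
  linarith [hbad n, this]

/-- `atBot` version, by reflection. -/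
lemma rv_uniform_bot (k : ℝ → ℝ) (hk : Measurable k) (ρ : ℝ)
    (hp : ∀ u : ℝ, Tendsto (fun t => k (t + u) - k t) atBot (nhds (ρ * u)))
    {ε : ℝ} (hε : 0 < ε) :
    ∃ δ > 0, ∀ᶠ t in atBot, ∀ u, |u| ≤ δ → |k (t + u) - k t - ρ * u| ≤ ε := by
  have hp' : ∀ u : ℝ, Tendsto (fun t => (k ∘ Neg.neg) (t + u) - (k ∘ Neg.neg) t)
      atTop (nhds ((-ρ) * u)) := by
    intro u
    have h2 := (hp (-u)).comp tendsto_neg_atTop_atBot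
    rw [show (-ρ) * u = ρ * (-u) by ring]
    refine h2.congr fun t => ?_
    simp only [Function.comp]
    rw [show -(t + u) = -t + -u by ring]
  obtain ⟨δ, hδ, hev⟩ := rv_uniform (k ∘ Neg.neg) (hk.comp measurable_neg) (-ρ) hp' hε
  refine ⟨δ, hδ, ?_⟩
  filter_upwards [tendsto_neg_atBot_atTop.eventually hev] with s hs u hu
  have h3 := hs (-u) (by simpa using hu)
  simp only [Function.comp] at h3
  rw [show -(-s + -u) = s + u by ring, neg_neg] at h3
  calc |k (s + u) - k s - ρ * u| = |k (s + u) - k s - (-ρ) * -u| := by ring_nf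
    _ ≤ ε := h3

/-- If `f → L` (where `L` is `0⁺` or `+∞`, encoded by the filter `L`, i.e. `𝓝[>] 0` or
`atTop`), `f/g → 1` along the approach to `x₀` (encoded by the filter `l`, covering any
`x₀ ∈ [0,+∞]`), `f` and `g` are positive, and `h` is a positive measurable function
regularly varying at `L` with index `ρ`, then `h(f(x))/h(g(x)) → 1`. -/
theorem stmt15 {ι : Type*} (l : Filter ι) (f g : ι → ℝ) (h : ℝ → ℝ) (ρ : ℝ)
    (L : Filter ℝ) (hL : L = nhdsWithin (0 : ℝ) (Set.Ioi 0) ∨ L = atTop)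
    (hfpos : ∀ᶠ x in l, 0 < f x) (hgpos : ∀ᶠ x in l, 0 < g x)
    (hmeas : Measurable h) (hpos : ∀ y > 0, 0 < h y)
    (hf : Tendsto f l L)
    (hfg : Tendsto (fun x => f x / g x) l (nhds 1))
    (hreg : ∀ a > 0, Tendsto (fun y => h (a * y) / h y) L (nhds (a ^ ρ))) :
    Tendsto (fun x => h (f x) / h (g x)) l (nhds 1) := by
  have hb : ∀ y : ℝ, 0 < y → 0 < h y := fun y hy => hpos y hy
  set k : ℝ → ℝ := fun t => Real.log (h (Real.exp t)) with hkdef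
  have hk : Measurable k := Real.measurable_log.comp (hmeas.comp Real.measurable_exp)
  -- pointwise additive regular variation along any filter mapped into L by exp
  have hlog : ∀ (M : Filter ℝ), Tendsto Real.exp M L →
      ∀ u : ℝ, Tendsto (fun t => k (t + u) - k t) M (nhds (ρ * u)) := by
    intro M hM u
    have ha : (0:ℝ) < Real.exp u := Real.exp_pos u
    have h1 := (hreg (Real.exp u) ha).comp hM
    have h2 : Tendsto (fun t => Real.log (h (Real.exp u * Real.exp t) / h (Real.exp t))) M
        (nhds (ρ * u)) := by
      have hc : ContinuousAt Real.log ((Real.exp u) ^ ρ) :=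
        Real.continuousAt_log (ne_of_gt (Real.rpow_pos_of_pos ha ρ))
      have h3 := hc.tendsto.comp h1
      rwa [Real.log_rpow ha, Real.log_exp] at h3
    refine h2.congr fun t => ?_
    have e1 : (0:ℝ) < Real.exp u * Real.exp t := mul_pos (Real.exp_pos u) (Real.exp_pos t)
    rw [Real.log_div (ne_of_gt (hb _ e1)) (ne_of_gt (hb _ (Real.exp_pos t)))]
    show _ = Real.log (h (Real.exp (t + u))) - Real.log (h (Real.exp t))
    rw [Real.exp_add, mul_comm]
  -- obtain limiting filter for log ∘ g together with the uniform estimate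
  have hfne : ∀ᶠ x in l, f x ≠ 0 := hfpos.mono fun x hx => ne_of_gt hx
  have hgf : Tendsto (fun x => g x / f x) l (nhds 1) := by
    have h1 := hfg.inv₀ one_ne_zero
    rw [inv_one] at h1
    refine h1.congr fun x => ?_
    rw [inv_div]
  obtain ⟨M, htlog, hkey⟩ : ∃ M : Filter ℝ, Tendsto (fun x => Real.log (g x)) l M ∧
      ∀ ε : ℝ, 0 < ε → ∃ δ > 0, ∀ᶠ t in M, ∀ u, |u| ≤ δ →
        |k (t + u) - k t - ρ * u| ≤ ε := by
    rcases hL with hL | hL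
    · subst hL
      have hg : Tendsto g l (nhdsWithin (0:ℝ) (Set.Ioi 0)) := by
        have h0 : Tendsto f l (nhds 0) := hf.mono_right nhdsWithin_le_nhds
        have h1 : Tendsto (fun x => f x * (g x / f x)) l (nhds (0 * 1)) := h0.mul hgf
        rw [zero_mul] at h1
        have h2 : Tendsto g l (nhds 0) := by
          refine h1.congr' ?_
          filter_upwards [hfne] with x hx
          field_simp
        exact tendsto_nhdsWithin_iff.mpr ⟨h2, hgpos.mono fun x hx => hx⟩
      refine ⟨atBot, Real.tendsto_log_nhdsGT_zero.comp hg, fun ε hε => ?_⟩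
      exact rv_uniform_bot k hk ρ (hlog atBot Real.tendsto_exp_atBot_nhdsGT) hε
    · subst hL
      have hg : Tendsto g l atTop := by
        have h1 : Tendsto (fun x => f x * (g x / f x)) l atTop :=
          Filter.Tendsto.atTop_mul_pos one_pos hf hgf
        refine h1.congr' ?_
        filter_upwards [hfne] with x hx
        field_simp
      refine ⟨atTop, Real.tendsto_log_atTop.comp hg, fun ε hε => ?_⟩
      exact rv_uniform k hk ρ (hlog atTop Real.tendsto_exp_atTop) hε
  -- log (f/g) → 0
  have hulog : Tendsto (fun x => Real.log (f x) - Real.log (g x)) l (nhds 0) := by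
    have hc : ContinuousAt Real.log 1 := Real.continuousAt_log one_ne_zero
    have h1 := hc.tendsto.comp hfg
    rw [Real.log_one] at h1
    refine h1.congr' ?_
    filter_upwards [hfpos, hgpos] with x hfx hgx
    exact Real.log_div (ne_of_gt hfx) (ne_of_gt hgx)
  -- main estimate
  have hmain : Tendsto (fun x => Real.log (h (f x)) - Real.log (h (g x))) l (nhds 0) := by
    rw [Metric.tendsto_nhds]
    intro ε hε
    obtain ⟨δ, hδ, hev⟩ := hkey (ε/3) (by linarith)
    set δ' : ℝ := min δ (ε / (3 * (|ρ| + 1))) with hδ'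
    have hδ'pos : 0 < δ' := lt_min hδ (by positivity)
    have h1 : ∀ᶠ x in l, |Real.log (f x) - Real.log (g x)| ≤ δ' := by
      have h2 := hulog.eventually (eventually_abs_sub_lt 0 hδ'pos)
      filter_upwards [h2] with x hx
      simpa using hx.le
    have h2 : ∀ᶠ x in l, ∀ u, |u| ≤ δ →
        |k (Real.log (g x) + u) - k (Real.log (g x)) - ρ * u| ≤ ε/3 :=
      htlog.eventually hev
    filter_upwards [h1, h2, hfpos, hgpos] with x hx1 hx2 hfx hgx
    have hU : |Real.log (f x) - Real.log (g x)| ≤ δ := hx1.trans (min_le_left _ _)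
    have h3 := hx2 _ hU
    have h4 : |ρ * (Real.log (f x) - Real.log (g x))| ≤ ε/3 := by
      rw [abs_mul]
      have h5 : |Real.log (f x) - Real.log (g x)| ≤ ε / (3 * (|ρ| + 1)) :=
        hx1.trans (min_le_right _ _)
      have h6 : |ρ| * |Real.log (f x) - Real.log (g x)| ≤ |ρ| * (ε / (3 * (|ρ| + 1))) :=
        mul_le_mul_of_nonneg_left h5 (abs_nonneg ρ)
      refine h6.trans ?_
      rw [show |ρ| * (ε / (3 * (|ρ| + 1))) = (|ρ| * ε) / (3 * (|ρ| + 1)) by ring,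
        div_le_div_iff₀ (by positivity) (by norm_num)]
      nlinarith [abs_nonneg ρ]
    rw [Real.dist_eq, sub_zero]
    have hkf : k (Real.log (g x) + (Real.log (f x) - Real.log (g x))) = Real.log (h (f x)) := by
      rw [show Real.log (g x) + (Real.log (f x) - Real.log (g x)) = Real.log (f x) by ring]
      show Real.log (h (Real.exp (Real.log (f x)))) = _
      rw [Real.exp_log hfx]
    have hkg : k (Real.log (g x)) = Real.log (h (g x)) := by
      show Real.log (h (Real.exp (Real.log (g x)))) = _
      rw [Real.exp_log hgx]
    rw [← hkf, ← hkg]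
    set T := Real.log (g x)
    set U := Real.log (f x) - Real.log (g x)
    calc |k (T + U) - k T| = |(k (T + U) - k T - ρ * U) + ρ * U| := by ring_nf
      _ ≤ |k (T + U) - k T - ρ * U| + |ρ * U| := abs_add_le _ _
      _ ≤ ε/3 + ε/3 := add_le_add (hx2 U hU) h4
      _ < ε := by linarith
  -- conclude by exponentiating
  have hexp := (Real.continuous_exp.tendsto 0).comp hmain
  rw [Real.exp_zero] at hexp
  refine hexp.congr' ?_
  filter_upwards [hfpos, hgpos] with x hfx hgx
  show Real.exp (Real.log (h (f x)) - Real.log (h (g x))) = h (f x) / h (g x)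
  rw [Real.exp_sub, Real.exp_log (hb _ hfx), Real.exp_log (hb _ hgx)]
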